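/- Let {W_i}_{i∈I} be a frame of subspaces for H with respect to weights {u_i} and frame operator S_{W,u}, and let {Z_j}_{j∈J} be a frame of subspaces for K with respect to weights {v_j} and frame operator S_{Z,v}. Then S_{W,u} ⊗ S_{Z,v} is the frame operator of the frame of subspaces {W_i ⊗ Z_j}_{i∈I, j∈J} of H⊗K with respect to the weights {u_i v_j}_{i∈I, j∈J}; that is, for all z ∈ H⊗K, (S_{W,u}⊗S_{Z,v})(z) = Σ_{i∈I} Σ_{j∈J} u_i² v_j² (π_{W_i}⊗π_{Z_j})(z). -/

import Mathlib

set_option maxHeartbeats 2000000 in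
/-- If `S_W` and `S_Z` are the frame operators of frames of subspaces
`{W i}` (weights `u i`) of `H` and `{Z j}` (weights `v j`) of `K`, then `S_W ⊗ S_Z` is
the frame operator of the frame of subspaces `{W i ⊗ Z j}` of `H ⊗ K` with respect to
the weights `{u i * v j}`:  for all `z ∈ H ⊗ K`,
`(S_W ⊗ S_Z)(z) = Σ_{i,j} (u i)² (v j)² (π_{W i} ⊗ π_{Z j})(z)`. -/
theorem tensor_product_frame_operator_of_subspaces
    {H K T : Type*}
    [NormedAddCommGroup H] [InnerProductSpace ℂ H] [CompleteSpace H]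
      [TopologicalSpace.SeparableSpace H]
    [NormedAddCommGroup K] [InnerProductSpace ℂ K] [CompleteSpace K]
      [TopologicalSpace.SeparableSpace K]
    [NormedAddCommGroup T] [InnerProductSpace ℂ T] [CompleteSpace T]
    {I J : Type*} [Countable I] [Countable J]
    -- the tensor product structure
    (tm : H →ₗ[ℂ] K →ₗ[ℂ] T)
    (htm_inner : ∀ (x x' : H) (y y' : K),
      (inner ℂ (tm x y) (tm x' y') : ℂ) = (inner ℂ x x' : ℂ) * (inner ℂ y y' : ℂ))
    (htm_dense : Dense (Submodule.span ℂ {z : T | ∃ x y, tm x y = z} : Set T))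
    -- the weights
    (u : I → ℝ) (v : J → ℝ) (hu : ∀ i, 0 < u i) (hv : ∀ j, 0 < v j)
    -- the families of closed subspaces
    (W : I → Submodule ℂ H) [∀ i, CompleteSpace (W i)]
    (Z : J → Submodule ℂ K) [∀ j, CompleteSpace (Z j)]
    -- frame-of-subspaces conditions
    (A B A' B' : ℝ) (hA : 0 < A) (hAB : A ≤ B) (hA' : 0 < A') (hAB' : A' ≤ B')
    (hW_lower : ∀ x : H,
      A * ‖x‖ ^ 2 ≤ ∑' i, u i ^ 2 * ‖(Submodule.orthogonalProjectionOnto (W i) x : H)‖ ^ 2)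
    (hW_upper : ∀ x : H,
      ∑' i, u i ^ 2 * ‖(Submodule.orthogonalProjectionOnto (W i) x : H)‖ ^ 2 ≤ B * ‖x‖ ^ 2)
    (hZ_lower : ∀ y : K,
      A' * ‖y‖ ^ 2 ≤ ∑' j, v j ^ 2 * ‖(Submodule.orthogonalProjectionOnto (Z j) y : K)‖ ^ 2)
    (hZ_upper : ∀ y : K,
      ∑' j, v j ^ 2 * ‖(Submodule.orthogonalProjectionOnto (Z j) y : K)‖ ^ 2 ≤ B' * ‖y‖ ^ 2)
    -- the frame operators `S_W` and `S_Z`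
    (SW : H →L[ℂ] H)
    (hSW : ∀ x : H, HasSum (fun i => u i ^ 2 • (Submodule.orthogonalProjectionOnto (W i) x : H)) (SW x))
    (SZ : K →L[ℂ] K)
    (hSZ : ∀ y : K, HasSum (fun j => v j ^ 2 • (Submodule.orthogonalProjectionOnto (Z j) y : K)) (SZ y))
    -- `SWZ` is the tensor product operator `S_W ⊗ S_Z` on `T = H ⊗ K`
    (SWZ : T →L[ℂ] T)
    (hSWZ : ∀ (x : H) (y : K), SWZ (tm x y) = tm (SW x) (SZ y))
    -- the orthogonal projections `π_{W i} ⊗ π_{Z j}` of `T` onto `W i ⊗ Z j`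
    (P : I → J → T →L[ℂ] T)
    (hP_mem : ∀ i j (t : T),
      P i j t ∈ (Submodule.span ℂ
        {s : T | ∃ w ∈ W i, ∃ z ∈ Z j, tm w z = s}).topologicalClosure)
    (hP_orth : ∀ i j (t : T),
      t - P i j t ∈ ((Submodule.span ℂ
        {s : T | ∃ w ∈ W i, ∃ z ∈ Z j, tm w z = s}).topologicalClosure)ᗮ) :
    -- conclusion: `S_W ⊗ S_Z` is the frame operator of `{W i ⊗ Z j}` w.r.t. `{u i * v j}`
    ∀ z : T, HasSum (fun p : I × J => (u p.1 * v p.2) ^ 2 • P p.1 p.2 z) (SWZ z) := by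
  classical
  -- ## Basic inner-product facts about orthogonal projections
  have hinnerW : ∀ (i : I) (x x' : H), (inner ℂ x' (Submodule.orthogonalProjectionOnto (W i) x : H) : ℂ)
      = inner ℂ (Submodule.orthogonalProjectionOnto (W i) x' : H) (Submodule.orthogonalProjectionOnto (W i) x : H) := by
    intro i x x'
    have h0 : (inner ℂ (x' - (Submodule.orthogonalProjectionOnto (W i) x' : H))
        ((Submodule.orthogonalProjectionOnto (W i) x : H)) : ℂ) = 0 :=
      (Submodule.mem_orthogonal' _ _).1 (Submodule.sub_starProjection_mem_orthogonal (K := W i) x') _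
        (SetLike.coe_mem _)
    calc (inner ℂ x' ((Submodule.orthogonalProjectionOnto (W i) x : H)) : ℂ)
        = inner ℂ ((x' - (Submodule.orthogonalProjectionOnto (W i) x' : H)) + (Submodule.orthogonalProjectionOnto (W i) x' : H))
            ((Submodule.orthogonalProjectionOnto (W i) x : H)) := by rw [sub_add_cancel]
      _ = _ := by rw [inner_add_left, h0, zero_add]
  have hinnerZ : ∀ (j : J) (y y' : K), (inner ℂ y' (Submodule.orthogonalProjectionOnto (Z j) y : K) : ℂ)
      = inner ℂ (Submodule.orthogonalProjectionOnto (Z j) y' : K) (Submodule.orthogonalProjectionOnto (Z j) y : K) := by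
    intro j y y'
    have h0 : (inner ℂ (y' - (Submodule.orthogonalProjectionOnto (Z j) y' : K))
        ((Submodule.orthogonalProjectionOnto (Z j) y : K)) : ℂ) = 0 :=
      (Submodule.mem_orthogonal' _ _).1 (Submodule.sub_starProjection_mem_orthogonal (K := Z j) y') _
        (SetLike.coe_mem _)
    calc (inner ℂ y' ((Submodule.orthogonalProjectionOnto (Z j) y : K)) : ℂ)
        = inner ℂ ((y' - (Submodule.orthogonalProjectionOnto (Z j) y' : K)) + (Submodule.orthogonalProjectionOnto (Z j) y' : K))
            ((Submodule.orthogonalProjectionOnto (Z j) y : K)) := by rw [sub_add_cancel]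
      _ = _ := by rw [inner_add_left, h0, zero_add]
  have hinnerP : ∀ (i : I) (j : J) (t t' : T),
      (inner ℂ t' (P i j t) : ℂ) = inner ℂ (P i j t') (P i j t) := by
    intro i j t t'
    have h0 : (inner ℂ (t' - P i j t') (P i j t) : ℂ) = 0 :=
      (Submodule.mem_orthogonal' _ _).1 (hP_orth i j t') _ (hP_mem i j t)
    calc (inner ℂ t' (P i j t) : ℂ)
        = inner ℂ ((t' - P i j t') + P i j t') (P i j t) := by rw [sub_add_cancel]
      _ = _ := by rw [inner_add_left, h0, zero_add]
  have hPnorm : ∀ (i : I) (j : J) (t : T),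
      (inner ℂ t (P i j t) : ℂ) = ((‖P i j t‖ : ℝ) : ℂ) ^ 2 := by
    intro i j t
    rw [hinnerP i j t t, inner_self_eq_norm_sq_to_K]
    norm_cast
  -- ## `P i j` agrees with `π_{W i} ⊗ π_{Z j}` on elementary tensors
  have hP_eq : ∀ (i : I) (j : J) (x : H) (y : K),
      P i j (tm x y) = tm (Submodule.orthogonalProjectionOnto (W i) x : H) (Submodule.orthogonalProjectionOnto (Z j) y : K) := by
    intro i j x y
    have ha_mem : tm (Submodule.orthogonalProjectionOnto (W i) x : H) (Submodule.orthogonalProjectionOnto (Z j) y : K)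
        ∈ (Submodule.span ℂ {s : T | ∃ w ∈ W i, ∃ z ∈ Z j, tm w z = s}).topologicalClosure :=
      Submodule.le_topologicalClosure _
        (Submodule.subset_span ⟨_, SetLike.coe_mem _, _, SetLike.coe_mem _, rfl⟩)
    have hd_orth : tm x y - tm (Submodule.orthogonalProjectionOnto (W i) x : H) (Submodule.orthogonalProjectionOnto (Z j) y : K)
        ∈ ((Submodule.span ℂ {s : T | ∃ w ∈ W i, ∃ z ∈ Z j, tm w z = s}).topologicalClosure)ᗮ := by
      rw [Submodule.mem_orthogonal]
      intro s hs
      have hcl : IsClosed {s : T | (inner ℂ s (tm x y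
          - tm (Submodule.orthogonalProjectionOnto (W i) x : H) (Submodule.orthogonalProjectionOnto (Z j) y : K)) : ℂ) = 0} :=
        isClosed_eq (continuous_id.inner continuous_const) continuous_const
      have hsp : ((Submodule.span ℂ {s : T | ∃ w ∈ W i, ∃ z ∈ Z j, tm w z = s}) : Set T)
          ⊆ {s : T | (inner ℂ s (tm x y
          - tm (Submodule.orthogonalProjectionOnto (W i) x : H) (Submodule.orthogonalProjectionOnto (Z j) y : K)) : ℂ) = 0} := by
        intro s hs
        refine Submodule.span_induction
          (p := fun s _ => (inner ℂ s (tm x y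
            - tm (Submodule.orthogonalProjectionOnto (W i) x : H) (Submodule.orthogonalProjectionOnto (Z j) y : K)) : ℂ) = 0)
          ?_ ?_ ?_ ?_ hs
        · rintro s ⟨w, hw, z, hz, rfl⟩
          have e1 : (inner ℂ w x : ℂ) = inner ℂ w (Submodule.orthogonalProjectionOnto (W i) x : H) := by
            have h0 : (inner ℂ w (x - (Submodule.orthogonalProjectionOnto (W i) x : H)) : ℂ) = 0 :=
              (Submodule.mem_orthogonal _ _).1 (Submodule.sub_starProjection_mem_orthogonal (K := W i) x) w hw
            rw [inner_sub_right] at h0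
            exact sub_eq_zero.1 h0
          have e2 : (inner ℂ z y : ℂ) = inner ℂ z (Submodule.orthogonalProjectionOnto (Z j) y : K) := by
            have h0 : (inner ℂ z (y - (Submodule.orthogonalProjectionOnto (Z j) y : K)) : ℂ) = 0 :=
              (Submodule.mem_orthogonal _ _).1 (Submodule.sub_starProjection_mem_orthogonal (K := Z j) y) z hz
            rw [inner_sub_right] at h0
            exact sub_eq_zero.1 h0
          show (inner ℂ (tm w z) (tm x y
            - tm (Submodule.orthogonalProjectionOnto (W i) x : H) (Submodule.orthogonalProjectionOnto (Z j) y : K)) : ℂ) = 0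
          rw [inner_sub_right, htm_inner, htm_inner, e1, e2, sub_self]
        · simp
        · intro a b _ _ hA2 hB2
          show (inner ℂ (a + b) _ : ℂ) = 0
          rw [inner_add_left, hA2, hB2, add_zero]
        · intro c a _ hA2
          show (inner ℂ (c • a) _ : ℂ) = 0
          rw [inner_smul_left, hA2, mul_zero]
      have hs' : s ∈ closure ((Submodule.span ℂ
          {s : T | ∃ w ∈ W i, ∃ z ∈ Z j, tm w z = s}) : Set T) := by
        rw [← Submodule.topologicalClosure_coe]; exact hs
      exact (hcl.closure_subset_iff.2 hsp) hs'
    have hdm : tm (Submodule.orthogonalProjectionOnto (W i) x : H) (Submodule.orthogonalProjectionOnto (Z j) y : K)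
        - P i j (tm x y)
        ∈ (Submodule.span ℂ {s : T | ∃ w ∈ W i, ∃ z ∈ Z j, tm w z = s}).topologicalClosure :=
      Submodule.sub_mem _ ha_mem (hP_mem i j (tm x y))
    have hdo : tm (Submodule.orthogonalProjectionOnto (W i) x : H) (Submodule.orthogonalProjectionOnto (Z j) y : K)
        - P i j (tm x y)
        ∈ ((Submodule.span ℂ {s : T | ∃ w ∈ W i, ∃ z ∈ Z j, tm w z = s}).topologicalClosure)ᗮ := by
      have h := Submodule.sub_mem _ (hP_orth i j (tm x y)) hd_orth
      have e : tm x y - P i j (tm x y) - (tm x y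
          - tm (Submodule.orthogonalProjectionOnto (W i) x : H) (Submodule.orthogonalProjectionOnto (Z j) y : K))
          = tm (Submodule.orthogonalProjectionOnto (W i) x : H) (Submodule.orthogonalProjectionOnto (Z j) y : K)
            - P i j (tm x y) := by abel
      rwa [e] at h
    have h0 : (inner ℂ (tm (Submodule.orthogonalProjectionOnto (W i) x : H) (Submodule.orthogonalProjectionOnto (Z j) y : K)
        - P i j (tm x y)) (tm (Submodule.orthogonalProjectionOnto (W i) x : H)
          (Submodule.orthogonalProjectionOnto (Z j) y : K) - P i j (tm x y)) : ℂ) = 0 :=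
      (Submodule.mem_orthogonal _ _).1 hdo _ hdm
    have := inner_self_eq_zero.1 h0
    exact (sub_eq_zero.1 this).symm
  -- ## Scalar summability from the lower frame bound
  have hsqW : ∀ x : H, Summable (fun i => u i ^ 2 * ‖(Submodule.orthogonalProjectionOnto (W i) x : H)‖ ^ 2) := by
    intro x
    by_contra hns
    have h0 : ∑' i, u i ^ 2 * ‖(Submodule.orthogonalProjectionOnto (W i) x : H)‖ ^ 2 = 0 :=
      tsum_eq_zero_of_not_summable hns
    have h1 := hW_lower x
    rw [h0] at h1
    have hx : x = 0 := by
      have h2 : ‖x‖ ^ 2 ≤ 0 := by nlinarith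
      have h3 : ‖x‖ = 0 := by nlinarith [norm_nonneg x]
      exact norm_eq_zero.1 h3
    subst hx
    exact hns (by simpa using summable_zero)
  have hsqZ : ∀ y : K, Summable (fun j => v j ^ 2 * ‖(Submodule.orthogonalProjectionOnto (Z j) y : K)‖ ^ 2) := by
    intro y
    by_contra hns
    have h0 : ∑' j, v j ^ 2 * ‖(Submodule.orthogonalProjectionOnto (Z j) y : K)‖ ^ 2 = 0 :=
      tsum_eq_zero_of_not_summable hns
    have h1 := hZ_lower y
    rw [h0] at h1
    have hy : y = 0 := by
      have h2 : ‖y‖ ^ 2 ≤ 0 := by nlinarith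
      have h3 : ‖y‖ = 0 := by nlinarith [norm_nonneg y]
      exact norm_eq_zero.1 h3
    subst hy
    exact hns (by simpa using summable_zero)
  -- ## HasSum of weighted inner products against the frame operators
  have hinnH : ∀ (x x' : H), HasSum
      (fun i => ((u i ^ 2 : ℝ) : ℂ) * inner ℂ x' (Submodule.orthogonalProjectionOnto (W i) x : H))
      (inner ℂ x' (SW x) : ℂ) := by
    intro x x'
    have h := (hSW x).mapL (innerSL ℂ x')
    simpa [RCLike.real_smul_eq_coe_smul (K := ℂ), inner_smul_right] using h
  have hinnK : ∀ (y y' : K), HasSum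
      (fun j => ((v j ^ 2 : ℝ) : ℂ) * inner ℂ y' (Submodule.orthogonalProjectionOnto (Z j) y : K))
      (inner ℂ y' (SZ y) : ℂ) := by
    intro y y'
    have h := (hSZ y).mapL (innerSL ℂ y')
    simpa [RCLike.real_smul_eq_coe_smul (K := ℂ), inner_smul_right] using h
  -- absolute summability of those families
  have hinnH_norm : ∀ (x x' : H), Summable
      (fun i => ‖((u i ^ 2 : ℝ) : ℂ) * inner ℂ x' (Submodule.orthogonalProjectionOnto (W i) x : H)‖) := by
    intro x x'
    refine Summable.of_nonneg_of_le (fun i => norm_nonneg _) (fun i => ?_)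
      (((hsqW x').add (hsqW x)).div_const 2)
    have h1 : ‖(inner ℂ x' (Submodule.orthogonalProjectionOnto (W i) x : H) : ℂ)‖
        ≤ ‖(Submodule.orthogonalProjectionOnto (W i) x' : H)‖ * ‖(Submodule.orthogonalProjectionOnto (W i) x : H)‖ := by
      rw [hinnerW]; exact norm_inner_le_norm _ _
    have h2 : ‖((u i ^ 2 : ℝ) : ℂ) * inner ℂ x' (Submodule.orthogonalProjectionOnto (W i) x : H)‖
        = u i ^ 2 * ‖(inner ℂ x' (Submodule.orthogonalProjectionOnto (W i) x : H) : ℂ)‖ := by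
      rw [norm_mul, Complex.norm_real, Real.norm_eq_abs, abs_of_nonneg (sq_nonneg _)]
    rw [h2]
    nlinarith [sq_nonneg (‖(Submodule.orthogonalProjectionOnto (W i) x' : H)‖
      - ‖(Submodule.orthogonalProjectionOnto (W i) x : H)‖), sq_nonneg (u i), norm_nonneg
      (inner ℂ x' (Submodule.orthogonalProjectionOnto (W i) x : H) : ℂ), sq_nonneg (u i * ‖(Submodule.orthogonalProjectionOnto (W i) x : H)‖)]
  have hinnK_norm : ∀ (y y' : K), Summable
      (fun j => ‖((v j ^ 2 : ℝ) : ℂ) * inner ℂ y' (Submodule.orthogonalProjectionOnto (Z j) y : K)‖) := by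
    intro y y'
    refine Summable.of_nonneg_of_le (fun j => norm_nonneg _) (fun j => ?_)
      (((hsqZ y').add (hsqZ y)).div_const 2)
    have h1 : ‖(inner ℂ y' (Submodule.orthogonalProjectionOnto (Z j) y : K) : ℂ)‖
        ≤ ‖(Submodule.orthogonalProjectionOnto (Z j) y' : K)‖ * ‖(Submodule.orthogonalProjectionOnto (Z j) y : K)‖ := by
      rw [hinnerZ]; exact norm_inner_le_norm _ _
    have h2 : ‖((v j ^ 2 : ℝ) : ℂ) * inner ℂ y' (Submodule.orthogonalProjectionOnto (Z j) y : K)‖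
        = v j ^ 2 * ‖(inner ℂ y' (Submodule.orthogonalProjectionOnto (Z j) y : K) : ℂ)‖ := by
      rw [norm_mul, Complex.norm_real, Real.norm_eq_abs, abs_of_nonneg (sq_nonneg _)]
    rw [h2]
    nlinarith [sq_nonneg (‖(Submodule.orthogonalProjectionOnto (Z j) y' : K)‖
      - ‖(Submodule.orthogonalProjectionOnto (Z j) y : K)‖), sq_nonneg (v j), norm_nonneg
      (inner ℂ y' (Submodule.orthogonalProjectionOnto (Z j) y : K) : ℂ), sq_nonneg (v j * ‖(Submodule.orthogonalProjectionOnto (Z j) y : K)‖)]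
  -- ## HasSum over the product index set, on elementary tensors
  have hbase : ∀ (x x' : H) (y y' : K), HasSum
      (fun p : I × J => (((u p.1 * v p.2) ^ 2 : ℝ) : ℂ)
        * inner ℂ (tm x' y') (P p.1 p.2 (tm x y)))
      (inner ℂ (tm x' y') (SWZ (tm x y)) : ℂ) := by
    intro x x' y y'
    have hprod : Summable (fun p : I × J =>
        (((u p.1 ^ 2 : ℝ) : ℂ) * inner ℂ x' (Submodule.orthogonalProjectionOnto (W p.1) x : H))
        * (((v p.2 ^ 2 : ℝ) : ℂ) * inner ℂ y' (Submodule.orthogonalProjectionOnto (Z p.2) y : K))) := by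
      apply Summable.of_norm
      have h := Summable.mul_of_nonneg (hinnH_norm x x') (hinnK_norm y y')
        (fun i => norm_nonneg _) (fun j => norm_nonneg _)
      simpa [norm_mul] using h
    have h := (hinnH x x').mul (hinnK y y') hprod
    have hfun : (fun p : I × J => (((u p.1 * v p.2) ^ 2 : ℝ) : ℂ)
        * inner ℂ (tm x' y') (P p.1 p.2 (tm x y)))
        = fun p : I × J =>
        (((u p.1 ^ 2 : ℝ) : ℂ) * inner ℂ x' (Submodule.orthogonalProjectionOnto (W p.1) x : H))
        * (((v p.2 ^ 2 : ℝ) : ℂ) * inner ℂ y' (Submodule.orthogonalProjectionOnto (Z p.2) y : K)) := by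
      funext p
      rw [hP_eq, htm_inner]
      push_cast
      ring
    have hval : (inner ℂ (tm x' y') (SWZ (tm x y)) : ℂ)
        = (inner ℂ x' (SW x) : ℂ) * (inner ℂ y' (SZ y) : ℂ) := by
      rw [hSWZ, htm_inner]
    rw [hfun, hval]
    exact h
  -- ## Extension to the span of elementary tensors (scalar version)
  have hspan1 : ∀ z' ∈ Submodule.span ℂ {z : T | ∃ x y, tm x y = z}, ∀ (x : H) (y : K),
      HasSum (fun p : I × J => (((u p.1 * v p.2) ^ 2 : ℝ) : ℂ)
        * inner ℂ z' (P p.1 p.2 (tm x y))) (inner ℂ z' (SWZ (tm x y)) : ℂ) := by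
    intro z' hz'
    refine Submodule.span_induction (p := fun z' _ => ∀ (x : H) (y : K),
      HasSum (fun p : I × J => (((u p.1 * v p.2) ^ 2 : ℝ) : ℂ)
        * inner ℂ z' (P p.1 p.2 (tm x y))) (inner ℂ z' (SWZ (tm x y)) : ℂ)) ?_ ?_ ?_ ?_ hz'
    · rintro s ⟨x', y', rfl⟩
      exact fun x y => hbase x x' y y'
    · intro x y
      simpa [inner_zero_left] using (hasSum_zero : HasSum (fun _ : I × J => (0 : ℂ)) 0)
    · intro a b _ _ ha hb
      intro x y
      simpa [inner_add_left, mul_add] using (ha x y).add (hb x y)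
    · intro c a _ ha
      intro x y
      have h := (ha x y).mul_right ((starRingEnd ℂ) c)
      simpa [inner_smul_left, mul_assoc] using h
  have hspan2 : ∀ z ∈ Submodule.span ℂ {z : T | ∃ x y, tm x y = z},
      ∀ z' ∈ Submodule.span ℂ {z : T | ∃ x y, tm x y = z},
      HasSum (fun p : I × J => (((u p.1 * v p.2) ^ 2 : ℝ) : ℂ)
        * inner ℂ z' (P p.1 p.2 z)) (inner ℂ z' (SWZ z) : ℂ) := by
    intro z hz
    refine Submodule.span_induction (p := fun z _ =>
      ∀ z' ∈ Submodule.span ℂ {z : T | ∃ x y, tm x y = z},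
      HasSum (fun p : I × J => (((u p.1 * v p.2) ^ 2 : ℝ) : ℂ)
        * inner ℂ z' (P p.1 p.2 z)) (inner ℂ z' (SWZ z) : ℂ)) ?_ ?_ ?_ ?_ hz
    · rintro s ⟨x, y, rfl⟩
      exact fun z' hz' => hspan1 z' hz' x y
    · intro z' _
      simpa [inner_zero_right] using (hasSum_zero : HasSum (fun _ : I × J => (0 : ℂ)) 0)
    · intro a b _ _ ha hb z' hz'
      simpa [map_add, inner_add_right, mul_add] using (ha z' hz').add (hb z' hz')
    · intro c a _ ha z' hz'
      have h := (ha z' hz').mul_left c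
      simpa [map_smul, inner_smul_right, mul_left_comm] using h
  -- ## diagonal real version on the span
  have hdiag : ∀ z ∈ Submodule.span ℂ {z : T | ∃ x y, tm x y = z},
      HasSum (fun p : I × J => (u p.1 * v p.2) ^ 2 * ‖P p.1 p.2 z‖ ^ 2)
        (Complex.re (inner ℂ z (SWZ z))) := by
    intro z hz
    have h := (hspan2 z hz z hz).mapL Complex.reCLM
    have hfun : (fun p : I × J => Complex.reCLM ((((u p.1 * v p.2) ^ 2 : ℝ) : ℂ)
        * inner ℂ z (P p.1 p.2 z)))
        = fun p : I × J => (u p.1 * v p.2) ^ 2 * ‖P p.1 p.2 z‖ ^ 2 := by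
      funext p
      rw [hPnorm]
      norm_cast
    rwa [hfun] at h
  -- ## uniform upper bound on finite partial sums of the scalar family
  have hC : (0:ℝ) < ‖SWZ‖ + 1 := by positivity
  have hbound : ∀ (G : Finset (I × J)) (z : T),
      (∑ p ∈ G, (u p.1 * v p.2) ^ 2 * ‖P p.1 p.2 z‖ ^ 2) ≤ (‖SWZ‖ + 1) * ‖z‖ ^ 2 := by
    intro G z
    have hcl : IsClosed {t : T |
        (∑ p ∈ G, (u p.1 * v p.2) ^ 2 * ‖P p.1 p.2 t‖ ^ 2) ≤ (‖SWZ‖ + 1) * ‖t‖ ^ 2} := by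
      apply isClosed_le
      · exact continuous_finset_sum _
          (fun p _ => continuous_const.mul (((P p.1 p.2).continuous.norm).pow 2))
      · exact continuous_const.mul (continuous_norm.pow 2)
    have hsub : ((Submodule.span ℂ {z : T | ∃ x y, tm x y = z}) : Set T)
        ⊆ {t : T | (∑ p ∈ G, (u p.1 * v p.2) ^ 2 * ‖P p.1 p.2 t‖ ^ 2)
            ≤ (‖SWZ‖ + 1) * ‖t‖ ^ 2} := by
      intro t ht
      have h1 := hdiag t ht
      have h2 : ∑ p ∈ G, (u p.1 * v p.2) ^ 2 * ‖P p.1 p.2 t‖ ^ 2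
          ≤ Complex.re (inner ℂ t (SWZ t)) :=
        sum_le_hasSum G (fun p _ => by positivity) h1
      refine h2.trans ?_
      have h3 : Complex.re (inner ℂ t (SWZ t) : ℂ) ≤ ‖t‖ * ‖SWZ t‖ := by
        have := re_inner_le_norm (𝕜 := ℂ) t (SWZ t)
        simpa using this
      have h4 : ‖SWZ t‖ ≤ ‖SWZ‖ * ‖t‖ := SWZ.le_opNorm t
      nlinarith [norm_nonneg t, norm_nonneg (SWZ t)]
    have hz : z ∈ closure ((Submodule.span ℂ {z : T | ∃ x y, tm x y = z}) : Set T) := by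
      rw [htm_dense.closure_eq]; trivial
    exact (hcl.closure_subset_iff.2 hsub) hz
  -- scalar family summable for every `z`
  have hscal : ∀ z : T, Summable (fun p : I × J => (u p.1 * v p.2) ^ 2 * ‖P p.1 p.2 z‖ ^ 2) :=
    fun z => summable_of_sum_le (fun p => by positivity) (fun G => hbound G z)
  -- ## Cauchy–Schwarz bound on the vector partial sums
  have hCS : ∀ (G : Finset (I × J)) (z : T),
      ‖∑ p ∈ G, (u p.1 * v p.2) ^ 2 • P p.1 p.2 z‖ ^ 2
        ≤ (‖SWZ‖ + 1) * ∑ p ∈ G, (u p.1 * v p.2) ^ 2 * ‖P p.1 p.2 z‖ ^ 2 := by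
    intro G z
    set t : T := ∑ p ∈ G, (u p.1 * v p.2) ^ 2 • P p.1 p.2 z with ht
    clear_value t
    have h1 : (‖t‖:ℝ) ^ 2 = Complex.re (inner ℂ t t) := by
      have h := inner_self_eq_norm_sq (𝕜 := ℂ) t
      simpa using h.symm
    have h2 : (inner ℂ t t : ℂ)
        = ∑ p ∈ G, (((u p.1 * v p.2) ^ 2 : ℝ) : ℂ) * inner ℂ t (P p.1 p.2 z) := by
      rw [ht, inner_sum]
      refine Finset.sum_congr rfl (fun p _ => ?_)
      rw [RCLike.real_smul_eq_coe_smul (K := ℂ), inner_smul_right]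
      norm_cast
    have h3 : ‖t‖ ^ 2 ≤ ∑ p ∈ G, (u p.1 * v p.2) ^ 2 * (‖P p.1 p.2 t‖ * ‖P p.1 p.2 z‖) := by
      rw [h1, h2, Complex.re_sum]
      refine Finset.sum_le_sum (fun p _ => ?_)
      have h4 : Complex.re ((((u p.1 * v p.2) ^ 2 : ℝ) : ℂ) * inner ℂ t (P p.1 p.2 z))
          ≤ ‖(((u p.1 * v p.2) ^ 2 : ℝ) : ℂ) * (inner ℂ t (P p.1 p.2 z) : ℂ)‖ :=
        Complex.re_le_norm _
      refine h4.trans ?_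
      rw [norm_mul, Complex.norm_real, Real.norm_eq_abs, abs_of_nonneg (sq_nonneg _)]
      have h5 : ‖(inner ℂ t (P p.1 p.2 z) : ℂ)‖ ≤ ‖P p.1 p.2 t‖ * ‖P p.1 p.2 z‖ := by
        rw [hinnerP]; exact norm_inner_le_norm _ _
      exact mul_le_mul_of_nonneg_left h5 (sq_nonneg _)
    have h5 : (∑ p ∈ G, (u p.1 * v p.2) ^ 2 * (‖P p.1 p.2 t‖ * ‖P p.1 p.2 z‖)) ^ 2
        ≤ (∑ p ∈ G, (u p.1 * v p.2) ^ 2 * ‖P p.1 p.2 t‖ ^ 2)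
          * ∑ p ∈ G, (u p.1 * v p.2) ^ 2 * ‖P p.1 p.2 z‖ ^ 2 := by
      refine Finset.sum_sq_le_sum_mul_sum_of_sq_eq_mul G
        (fun p _ => by positivity) (fun p _ => by positivity) (fun p _ => by ring)
    have h6 : (∑ p ∈ G, (u p.1 * v p.2) ^ 2 * ‖P p.1 p.2 t‖ ^ 2) ≤ (‖SWZ‖ + 1) * ‖t‖ ^ 2 :=
      hbound G t
    by_cases htz : ‖t‖ = 0
    · rw [htz]
      have : (0:ℝ) ≤ ∑ p ∈ G, (u p.1 * v p.2) ^ 2 * ‖P p.1 p.2 z‖ ^ 2 :=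
        Finset.sum_nonneg (fun p _ => by positivity)
      nlinarith
    · have hpos : 0 < ‖t‖ ^ 2 := by positivity
      have hSz : (0:ℝ) ≤ ∑ p ∈ G, (u p.1 * v p.2) ^ 2 * ‖P p.1 p.2 z‖ ^ 2 :=
        Finset.sum_nonneg (fun p _ => by positivity)
      nlinarith [sq_nonneg (∑ p ∈ G, (u p.1 * v p.2) ^ 2 * (‖P p.1 p.2 t‖ * ‖P p.1 p.2 z‖))]
  -- ## the vector family is summable for every `z`
  have hvec : ∀ z : T, Summable (fun p : I × J => (u p.1 * v p.2) ^ 2 • P p.1 p.2 z) := by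
    intro z
    rw [summable_iff_vanishing_norm]
    intro ε hε
    obtain ⟨G₀, hG₀⟩ := summable_iff_vanishing_norm.1 (hscal z) (ε ^ 2 / (‖SWZ‖ + 1))
      (by positivity)
    refine ⟨G₀, fun G hG => ?_⟩
    have h1 := hCS G z
    have h2 : ∑ p ∈ G, (u p.1 * v p.2) ^ 2 * ‖P p.1 p.2 z‖ ^ 2 < ε ^ 2 / (‖SWZ‖ + 1) := by
      have h3 := hG₀ G hG
      rw [Real.norm_eq_abs] at h3
      exact (le_abs_self _).trans_lt h3
    have h4 : ‖∑ p ∈ G, (u p.1 * v p.2) ^ 2 • P p.1 p.2 z‖ ^ 2 < ε ^ 2 := by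
      have h5 : (‖SWZ‖ + 1) * (∑ p ∈ G, (u p.1 * v p.2) ^ 2 * ‖P p.1 p.2 z‖ ^ 2)
          < (‖SWZ‖ + 1) * (ε ^ 2 / (‖SWZ‖ + 1)) := by
        exact mul_lt_mul_of_pos_left h2 hC
      rw [mul_div_cancel₀ _ (ne_of_gt hC)] at h5
      exact lt_of_le_of_lt h1 h5
    exact lt_of_pow_lt_pow_left₀ 2 hε.le h4
  -- ## norm bound for the total sums
  have hnorm_tsum : ∀ z : T,
      ‖∑' p : I × J, (u p.1 * v p.2) ^ 2 • P p.1 p.2 z‖ ≤ (‖SWZ‖ + 1) * ‖z‖ := by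
    intro z
    have hs := (hvec z).hasSum
    have htend : Filter.Tendsto
        (fun G : Finset (I × J) => ‖∑ p ∈ G, (u p.1 * v p.2) ^ 2 • P p.1 p.2 z‖)
        Filter.atTop (nhds ‖∑' p : I × J, (u p.1 * v p.2) ^ 2 • P p.1 p.2 z‖) :=
      (continuous_norm.tendsto _).comp hs
    refine le_of_tendsto htend (Filter.Eventually.of_forall (fun G => ?_))
    have h1 := hCS G z
    have h2 := hbound G z
    have h3 : ‖∑ p ∈ G, (u p.1 * v p.2) ^ 2 • P p.1 p.2 z‖ ^ 2
        ≤ ((‖SWZ‖ + 1) * ‖z‖) ^ 2 := by nlinarith [norm_nonneg z]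
    have h4 : (0:ℝ) ≤ (‖SWZ‖ + 1) * ‖z‖ := by positivity
    nlinarith [norm_nonneg (∑ p ∈ G, (u p.1 * v p.2) ^ 2 • P p.1 p.2 z)]
  -- ## identification of the sum on the dense subspace
  have heqD : ∀ d ∈ Submodule.span ℂ {z : T | ∃ x y, tm x y = z},
      (∑' p : I × J, (u p.1 * v p.2) ^ 2 • P p.1 p.2 d) = SWZ d := by
    intro d hd
    have hs := (hvec d).hasSum
    have hfun : (fun z' : T => (inner ℂ z'
        ((∑' p : I × J, (u p.1 * v p.2) ^ 2 • P p.1 p.2 d) - SWZ d) : ℂ)) = fun _ => 0 := by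
      refine Continuous.ext_on htm_dense ?_ continuous_const ?_
      · exact continuous_id.inner continuous_const
      · intro z' hz'
        have h1 := hs.mapL (innerSL ℂ z')
        have h2 : HasSum (fun p : I × J => (((u p.1 * v p.2) ^ 2 : ℝ) : ℂ)
            * inner ℂ z' (P p.1 p.2 d))
            (inner ℂ z' (∑' p : I × J, (u p.1 * v p.2) ^ 2 • P p.1 p.2 d) : ℂ) := by
          have hfun2 : (fun p : I × J => (innerSL ℂ z') ((u p.1 * v p.2) ^ 2 • P p.1 p.2 d))
              = fun p : I × J => (((u p.1 * v p.2) ^ 2 : ℝ) : ℂ) * inner ℂ z' (P p.1 p.2 d) := by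
            funext p
            simp only [innerSL_apply_apply, RCLike.real_smul_eq_coe_smul (K := ℂ), inner_smul_right]
            norm_cast
          rw [hfun2] at h1
          simpa using h1
        have h3 := hspan2 d hd z' hz'
        have h4 : (inner ℂ z' (∑' p : I × J, (u p.1 * v p.2) ^ 2 • P p.1 p.2 d) : ℂ)
            = inner ℂ z' (SWZ d) := h2.unique h3
        simp [inner_sub_right, h4]
    have h5 := congrFun hfun ((∑' p : I × J, (u p.1 * v p.2) ^ 2 • P p.1 p.2 d) - SWZ d)
    have h6 : ((∑' p : I × J, (u p.1 * v p.2) ^ 2 • P p.1 p.2 d) - SWZ d) = 0 := by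
      rwa [inner_self_eq_zero] at h5
    exact sub_eq_zero.1 h6
  -- ## conclusion for arbitrary `z`
  intro z
  rw [(hvec z).hasSum_iff]
  by_contra hne
  have hδpos : 0 < ‖(∑' p : I × J, (u p.1 * v p.2) ^ 2 • P p.1 p.2 z) - SWZ z‖ := by
    rw [norm_pos_iff, sub_ne_zero]; exact hne
  set δ := ‖(∑' p : I × J, (u p.1 * v p.2) ^ 2 • P p.1 p.2 z) - SWZ z‖ with hδ
  obtain ⟨d, hd, hdist⟩ := htm_dense.exists_dist_lt z
    (show (0:ℝ) < δ / (2 * (‖SWZ‖ + 1 + ‖SWZ‖)) by positivity)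
  have hzd : ‖z - d‖ < δ / (2 * (‖SWZ‖ + 1 + ‖SWZ‖)) := by
    rwa [dist_eq_norm] at hdist
  have heq := heqD d hd
  have h2 : HasSum (fun p : I × J => (u p.1 * v p.2) ^ 2 • P p.1 p.2 (z - d))
      ((∑' p : I × J, (u p.1 * v p.2) ^ 2 • P p.1 p.2 z)
        - ∑' p : I × J, (u p.1 * v p.2) ^ 2 • P p.1 p.2 d) := by
    have h := (hvec z).hasSum.sub (hvec d).hasSum
    have hfun : (fun p : I × J => (u p.1 * v p.2) ^ 2 • P p.1 p.2 (z - d))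
        = fun p : I × J => (u p.1 * v p.2) ^ 2 • P p.1 p.2 z
          - (u p.1 * v p.2) ^ 2 • P p.1 p.2 d := by
      funext p
      rw [map_sub, smul_sub]
    rw [hfun]
    exact h
  have h3 : (∑' p : I × J, (u p.1 * v p.2) ^ 2 • P p.1 p.2 z)
      - ∑' p : I × J, (u p.1 * v p.2) ^ 2 • P p.1 p.2 d
      = ∑' p : I × J, (u p.1 * v p.2) ^ 2 • P p.1 p.2 (z - d) := h2.tsum_eq.symm
  have h4 : δ ≤ (‖SWZ‖ + 1 + ‖SWZ‖) * ‖z - d‖ := by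
    have e1 : (∑' p : I × J, (u p.1 * v p.2) ^ 2 • P p.1 p.2 z) - SWZ z
        = (∑' p : I × J, (u p.1 * v p.2) ^ 2 • P p.1 p.2 (z - d)) + (SWZ d - SWZ z) := by
      rw [← h3, heq]; abel
    rw [hδ, e1]
    have e2 : ‖SWZ d - SWZ z‖ ≤ ‖SWZ‖ * ‖z - d‖ := by
      have := SWZ.le_opNorm (d - z)
      rw [map_sub] at this
      rwa [show ‖d - z‖ = ‖z - d‖ from norm_sub_rev d z] at this
    calc ‖(∑' p : I × J, (u p.1 * v p.2) ^ 2 • P p.1 p.2 (z - d)) + (SWZ d - SWZ z)‖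
        ≤ ‖∑' p : I × J, (u p.1 * v p.2) ^ 2 • P p.1 p.2 (z - d)‖ + ‖SWZ d - SWZ z‖ :=
          norm_add_le _ _
      _ ≤ (‖SWZ‖ + 1) * ‖z - d‖ + ‖SWZ‖ * ‖z - d‖ :=
          add_le_add (hnorm_tsum (z - d)) e2
      _ = (‖SWZ‖ + 1 + ‖SWZ‖) * ‖z - d‖ := by ring
  have h5 : (‖SWZ‖ + 1 + ‖SWZ‖) * ‖z - d‖
      < (‖SWZ‖ + 1 + ‖SWZ‖) * (δ / (2 * (‖SWZ‖ + 1 + ‖SWZ‖))) := by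
    have hpos : (0:ℝ) < ‖SWZ‖ + 1 + ‖SWZ‖ := by positivity
    exact mul_lt_mul_of_pos_left hzd hpos
  have h6 : (‖SWZ‖ + 1 + ‖SWZ‖) * (δ / (2 * (‖SWZ‖ + 1 + ‖SWZ‖))) = δ / 2 := by
    field_simp
  have : δ < δ / 2 := lt_of_le_of_lt h4 (h6 ▸ h5)
  linarith
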